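/- Algebra property of difference-quotient spaces: with the spaces C^{m,l,ω} on B^n(η) as defined via iterated differences Δ_h and derivatives (norm Σ_{|β|≤m} Σ_{j=0}^{l} sup_{(x,h)∈Ω_j} ω(|h|)^{−j}‖Δ_h^j ∂_x^β A(x)‖), the product of two matrix-valued functions satisfies: if A, B ∈ C^{m,l,ω} then AB ∈ C^{m,l,ω} and ‖AB‖_{C^{m,l,ω}} ≤ C_{m,l} ‖A‖_{C^{m,l,ω}} ‖B‖_{C^{m,l,ω}}, where C_{m,l} depends only on m and l. Moreover, for j ≤ m and k ≤ l, ‖A‖_{C^{j,k,ω}} ≤ ‖A‖_{C^{m,l,ω}}. -/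

import Mathlib

set_option linter.unusedSectionVars false
set_option linter.unnecessarySimpa false
set_option maxHeartbeats 1000000


open Metric

/-- The iterated coordinate partial derivative `∂_x^β B` for an ordered
multi-index (list of coordinate directions) `β`. -/
noncomputable def pderivList {N : ℕ} {V : Type*} [NormedAddCommGroup V]
    [NormedSpace ℝ V] :
    List (Fin N) → (EuclideanSpace ℝ (Fin N) → V) → (EuclideanSpace ℝ (Fin N) → V)
  | [], B => B
  | i :: L, B => fun x => fderiv ℝ (pderivList L B) x (EuclideanSpace.single i 1)

/-- The iterated difference operator `Δ_h^j B(x)`, where `Δ_h B(x) = B(x+h) − B(x)`. -/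
def iterDiff {N : ℕ} {V : Type*} [AddCommGroup V] :
    ℕ → EuclideanSpace ℝ (Fin N) → (EuclideanSpace ℝ (Fin N) → V) →
      (EuclideanSpace ℝ (Fin N) → V)
  | 0, _, B => B
  | j + 1, h, B => fun x => iterDiff j h B (x + h) - iterDiff j h B x

namespace DQAux

abbrev ESp (N : ℕ) := EuclideanSpace ℝ (Fin N)

variable {N : ℕ} {V : Type*} [NormedAddCommGroup V] [NormedSpace ℝ V]

lemma hasFDerivAt_shift {F : ESp N → V} {c x : ESp N} (hF : DifferentiableAt ℝ F (x + c)) :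
    HasFDerivAt (fun y => F (y + c)) (fderiv ℝ F (x + c)) x := by
  have h1 : HasFDerivAt (fun y : ESp N => y + c) (ContinuousLinearMap.id ℝ (ESp N)) x :=
    (hasFDerivAt_id x).add_const c
  have h2 := hF.hasFDerivAt.comp x h1
  simp only [ContinuousLinearMap.comp_id] at h2
  exact h2

lemma differentiableAt_shift {F : ESp N → V} {c x : ESp N} (hF : DifferentiableAt ℝ F (x + c)) :
    DifferentiableAt ℝ (fun y => F (y + c)) x :=
  (hasFDerivAt_shift hF).differentiableAt

lemma fderiv_shift {F : ESp N → V} {c x : ESp N} (hF : DifferentiableAt ℝ F (x + c)) :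
    fderiv ℝ (fun y => F (y + c)) x = fderiv ℝ F (x + c) :=
  (hasFDerivAt_shift hF).fderiv

lemma shift_index {x h : ESp N} (i : ℕ) : x + h + (i : ℝ) • h = x + ((i + 1 : ℕ) : ℝ) • h := by
  push_cast; rw [add_smul, one_smul]; abel

lemma add_smul_nat (x h : ESp N) (a b : ℕ) :
    x + (a : ℝ) • h + (b : ℝ) • h = x + ((a + b : ℕ) : ℝ) • h := by
  push_cast; rw [add_smul]; abel

lemma add_smul_one (x h : ESp N) (a : ℕ) :
    x + (a : ℝ) • h + h = x + ((a + 1 : ℕ) : ℝ) • h := by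
  push_cast; rw [add_smul, one_smul]; abel

lemma differentiableAt_iterDiff {F : ESp N → V} {h : ESp N} :
    ∀ (j : ℕ) (x : ESp N), (∀ i : ℕ, i ≤ j → DifferentiableAt ℝ F (x + (i : ℝ) • h)) →
      DifferentiableAt ℝ (iterDiff j h F) x := by
  intro j
  induction j with
  | zero => intro x hx; simpa [iterDiff] using hx 0 le_rfl
  | succ j ih =>
    intro x hx
    have h1 : DifferentiableAt ℝ (fun y => iterDiff j h F (y + h)) x := by
      apply differentiableAt_shift
      apply ih
      intro i hi
      rw [shift_index]
      exact hx (i + 1) (by omega)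
    exact (h1.sub (ih x fun i hi => hx i (by omega)) : _)

lemma fderiv_iterDiff {F : ESp N → V} {h : ESp N} {v : ESp N} :
    ∀ (j : ℕ) (x : ESp N), (∀ i : ℕ, i ≤ j → DifferentiableAt ℝ F (x + (i : ℝ) • h)) →
      fderiv ℝ (iterDiff j h F) x v = iterDiff j h (fun y => fderiv ℝ F y v) x := by
  intro j
  induction j with
  | zero => intro x hx; simp [iterDiff]
  | succ j ih =>
    intro x hx
    have hx' : ∀ i : ℕ, i ≤ j → DifferentiableAt ℝ F (x + h + (i : ℝ) • h) := by
      intro i hi; rw [shift_index]; exact hx (i + 1) (by omega)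
    have hx0 : ∀ i : ℕ, i ≤ j → DifferentiableAt ℝ F (x + (i : ℝ) • h) :=
      fun i hi => hx i (by omega)
    have d1 : DifferentiableAt ℝ (iterDiff j h F) (x + h) := differentiableAt_iterDiff j _ hx'
    have d1' : DifferentiableAt ℝ (fun y => iterDiff j h F (y + h)) x := differentiableAt_shift d1
    have d0 : DifferentiableAt ℝ (iterDiff j h F) x := differentiableAt_iterDiff j x hx0
    show fderiv ℝ (fun y => iterDiff j h F (y + h) - iterDiff j h F y) x v = _
    rw [fderiv_fun_sub d1' d0]
    simp only [ContinuousLinearMap.sub_apply]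
    rw [fderiv_shift d1, ih (x + h) hx', ih x hx0]
    rfl

lemma contDiffOn_pderivList {F : ESp N → V} {s : Set (ESp N)} (hs : IsOpen s) {m : ℕ}
    (hF : ContDiffOn ℝ m F s) :
    ∀ L : List (Fin N), L.length ≤ m →
      ContDiffOn ℝ ((m - L.length : ℕ)) (pderivList L F) s := by
  intro L
  induction L with
  | nil => intro _; simpa [pderivList] using hF.of_le (by exact_mod_cast Nat.sub_le m 0)
  | cons i L ih =>
    intro hlen
    have h1 : ContDiffOn ℝ ((m - L.length : ℕ)) (pderivList L F) s :=
      ih (by simpa using Nat.le_of_succ_le hlen)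
    have h2 : ContDiffOn ℝ ((m - (L.length + 1) : ℕ)) (fderiv ℝ (pderivList L F)) s := by
      apply h1.fderiv_of_isOpen hs
      have : (m - (L.length + 1)) + 1 = m - L.length := by
        simp at hlen; omega
      exact_mod_cast this.le
    have h3 : ContDiffOn ℝ ((m - (L.length + 1) : ℕ))
        (fun x => fderiv ℝ (pderivList L F) x (EuclideanSpace.single i 1)) s :=
      h2.clm_apply contDiffOn_const
    simpa [pderivList] using h3

lemma differentiableAt_pderivList {F : ESp N → V} {s : Set (ESp N)} (hs : IsOpen s) {m : ℕ}
    (hF : ContDiffOn ℝ m F s) {L : List (Fin N)} (hlen : L.length < m) {x : ESp N}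
    (hx : x ∈ s) : DifferentiableAt ℝ (pderivList L F) x := by
  have h1 := contDiffOn_pderivList hs hF L hlen.le
  have h2 : DifferentiableOn ℝ (pderivList L F) s := by
    apply h1.differentiableOn
    have : (1 : ℕ) ≤ m - L.length := by omega
    exact_mod_cast (Nat.one_le_iff_ne_zero.mp this)
  exact h2.differentiableAt (hs.mem_nhds hx)

lemma list_map_sum_sub {α : Type*} (T : List α) (f g : α → V) :
    (T.map f).sum - (T.map g).sum = (T.map fun t => f t - g t).sum := by
  induction T with
  | nil => simp
  | cons a T ih => simp [← ih]; abel

lemma differentiableAt_listSum {α : Type*} (T : List α) (f : α → ESp N → V) (x : ESp N)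
    (hf : ∀ t ∈ T, DifferentiableAt ℝ (f t) x) :
    DifferentiableAt ℝ (fun y => (T.map (fun t => f t y)).sum) x := by
  induction T with
  | nil => simpa using differentiableAt_const (0 : V)
  | cons a T ih =>
    simp only [List.map_cons, List.sum_cons]
    exact (hf a (by simp)).add (ih fun t ht => hf t (by simp [ht]))

lemma fderiv_listSum {α : Type*} (T : List α) (f : α → ESp N → V) (x v : ESp N)
    (hf : ∀ t ∈ T, DifferentiableAt ℝ (f t) x) :
    fderiv ℝ (fun y => (T.map (fun t => f t y)).sum) x v
      = (T.map (fun t => fderiv ℝ (f t) x v)).sum := by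
  induction T with
  | nil => simp
  | cons a T ih =>
    simp only [List.map_cons, List.sum_cons]
    rw [fderiv_fun_add (hf a (by simp)) (differentiableAt_listSum T f x fun t ht => hf t (by simp [ht]))]
    simp [ih fun t ht => hf t (by simp [ht])]

lemma norm_list_sum_le (T : List V) : ‖T.sum‖ ≤ (T.map norm).sum := by
  induction T with
  | nil => simp
  | cons a T ih =>
    simp only [List.sum_cons, List.map_cons]
    exact le_trans (norm_add_le _ _) (by linarith)

structure DQTerm (N : ℕ) where
  j1 : ℕ
  k1 : ℕ
  L1 : List (Fin N)
  j2 : ℕ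
  k2 : ℕ
  L2 : List (Fin N)

def DQGood {N : ℕ} (j r : ℕ) (t : DQTerm N) : Prop :=
  t.j1 + t.j2 = j ∧ t.k1 ≤ t.j2 ∧ t.k2 ≤ t.j1 ∧ t.L1.length + t.L2.length = r

variable {W : Type*} [NormedRing W] [NormedAlgebra ℝ W]

noncomputable def termVal (A B : ESp N → W) (h : ESp N) (t : DQTerm N) (x : ESp N) : W :=
  iterDiff t.j1 h (pderivList t.L1 A) (x + (t.k1 : ℝ) • h) *
    iterDiff t.j2 h (pderivList t.L2 B) (x + (t.k2 : ℝ) • h)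

end DQAux

namespace DQAux

variable {N : ℕ} {W : Type*} [NormedRing W] [NormedAlgebra ℝ W]

lemma list_map_sum_add {V : Type*} [AddCommGroup V] {α : Type*} (T : List α) (f g : α → V) :
    (T.map fun t => f t + g t).sum = (T.map f).sum + (T.map g).sum := by
  induction T with
  | nil => simp
  | cons a T ih => simp [ih]; abel

/-- The difference step: `Δ_h (P(·+k₁h)Q(·+k₂h))` splits into two terms. -/
lemma termVal_diff (A B : ESp N → W) (h : ESp N) (t : DQTerm N) (x : ESp N) :
    termVal A B h t (x + h) - termVal A B h t x =
      termVal A B h ⟨t.j1 + 1, t.k1, t.L1, t.j2, t.k2 + 1, t.L2⟩ x +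
      termVal A B h ⟨t.j1, t.k1, t.L1, t.j2 + 1, t.k2, t.L2⟩ x := by
  obtain ⟨j1, k1, L1, j2, k2, L2⟩ := t
  show iterDiff j1 h (pderivList L1 A) (x + h + (k1 : ℝ) • h) *
        iterDiff j2 h (pderivList L2 B) (x + h + (k2 : ℝ) • h) -
      iterDiff j1 h (pderivList L1 A) (x + (k1 : ℝ) • h) *
        iterDiff j2 h (pderivList L2 B) (x + (k2 : ℝ) • h) =
      (iterDiff j1 h (pderivList L1 A) (x + ((k1:ℕ) : ℝ) • h + h) -
        iterDiff j1 h (pderivList L1 A) (x + ((k1:ℕ) : ℝ) • h)) *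
        iterDiff j2 h (pderivList L2 B) (x + ((k2 + 1 : ℕ) : ℝ) • h) +
      iterDiff j1 h (pderivList L1 A) (x + ((k1:ℕ) : ℝ) • h) *
        (iterDiff j2 h (pderivList L2 B) (x + ((k2:ℕ) : ℝ) • h + h) -
          iterDiff j2 h (pderivList L2 B) (x + ((k2:ℕ) : ℝ) • h))
  rw [shift_index, shift_index, add_smul_one, add_smul_one]
  noncomm_ring

lemma isOpen_admissible (j : ℕ) (h : ESp N) (η : ℝ) :
    IsOpen {x : ESp N | ∀ i : ℕ, i ≤ j → x + (i : ℝ) • h ∈ ball (0 : ESp N) η} := by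
  have : {x : ESp N | ∀ i : ℕ, i ≤ j → x + (i : ℝ) • h ∈ ball (0 : ESp N) η}
      = ⋂ i : Fin (j + 1), (fun x : ESp N => x + ((i : ℕ) : ℝ) • h) ⁻¹' ball (0 : ESp N) η := by
    ext x
    simp only [Set.mem_setOf_eq, Set.mem_iInter, Set.mem_preimage]
    constructor
    · intro hx i; exact hx i (by omega)
    · intro hx i hi; exact hx ⟨i, by omega⟩
  rw [this]
  exact isOpen_iInter_of_finite fun i =>
    isOpen_ball.preimage (continuous_id.add continuous_const)

variable {m : ℕ} {η : ℝ} {A B : ESp N → W}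

lemma termVal_differentiableAt (hA : ContDiffOn ℝ m A (ball 0 η))
    (hB : ContDiffOn ℝ m B (ball 0 η)) {j r : ℕ} (hr : r < m) {t : DQTerm N}
    (ht : DQGood j r t) (h : ESp N) {x : ESp N}
    (hx : ∀ i : ℕ, i ≤ j → x + (i : ℝ) • h ∈ ball (0 : ESp N) η) :
    DifferentiableAt ℝ (termVal A B h t) x := by
  obtain ⟨hj, hk1, hk2, hL⟩ := ht
  have d1 : DifferentiableAt ℝ
      (fun y => iterDiff t.j1 h (pderivList t.L1 A) (y + (t.k1 : ℝ) • h)) x := by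
    apply differentiableAt_shift
    apply differentiableAt_iterDiff
    intro i' hi'
    rw [add_smul_nat]
    exact differentiableAt_pderivList isOpen_ball hA (by omega) (hx (t.k1 + i') (by omega))
  have d2 : DifferentiableAt ℝ
      (fun y => iterDiff t.j2 h (pderivList t.L2 B) (y + (t.k2 : ℝ) • h)) x := by
    apply differentiableAt_shift
    apply differentiableAt_iterDiff
    intro i' hi'
    rw [add_smul_nat]
    exact differentiableAt_pderivList isOpen_ball hB (by omega) (hx (t.k2 + i') (by omega))
  exact (d1.mul d2 : _)

lemma termVal_fderiv_apply (hA : ContDiffOn ℝ m A (ball 0 η))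
    (hB : ContDiffOn ℝ m B (ball 0 η)) {j r : ℕ} (hr : r < m) {t : DQTerm N}
    (ht : DQGood j r t) (h : ESp N) {x : ESp N}
    (hx : ∀ i : ℕ, i ≤ j → x + (i : ℝ) • h ∈ ball (0 : ESp N) η) (i0 : Fin N) :
    fderiv ℝ (termVal A B h t) x (EuclideanSpace.single i0 1) =
      termVal A B h ⟨t.j1, t.k1, t.L1, t.j2, t.k2, i0 :: t.L2⟩ x +
      termVal A B h ⟨t.j1, t.k1, i0 :: t.L1, t.j2, t.k2, t.L2⟩ x := by
  obtain ⟨hj, hk1, hk2, hL⟩ := ht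
  have hpts1 : ∀ i' : ℕ, i' ≤ t.j1 →
      DifferentiableAt ℝ (pderivList t.L1 A) (x + (t.k1 : ℝ) • h + (i' : ℝ) • h) := by
    intro i' hi'
    rw [add_smul_nat]
    exact differentiableAt_pderivList isOpen_ball hA (by omega) (hx (t.k1 + i') (by omega))
  have hpts2 : ∀ i' : ℕ, i' ≤ t.j2 →
      DifferentiableAt ℝ (pderivList t.L2 B) (x + (t.k2 : ℝ) • h + (i' : ℝ) • h) := by
    intro i' hi'
    rw [add_smul_nat]
    exact differentiableAt_pderivList isOpen_ball hB (by omega) (hx (t.k2 + i') (by omega))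
  have dP : DifferentiableAt ℝ (iterDiff t.j1 h (pderivList t.L1 A)) (x + (t.k1 : ℝ) • h) :=
    differentiableAt_iterDiff _ _ hpts1
  have dQ : DifferentiableAt ℝ (iterDiff t.j2 h (pderivList t.L2 B)) (x + (t.k2 : ℝ) • h) :=
    differentiableAt_iterDiff _ _ hpts2
  have d1 : DifferentiableAt ℝ
      (fun y => iterDiff t.j1 h (pderivList t.L1 A) (y + (t.k1 : ℝ) • h)) x :=
    differentiableAt_shift dP
  have d2 : DifferentiableAt ℝ
      (fun y => iterDiff t.j2 h (pderivList t.L2 B) (y + (t.k2 : ℝ) • h)) x :=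
    differentiableAt_shift dQ
  have e0 : fderiv ℝ (termVal A B h t) x =
      fderiv ℝ (fun y => (fun y => iterDiff t.j1 h (pderivList t.L1 A) (y + (t.k1 : ℝ) • h)) y *
        (fun y => iterDiff t.j2 h (pderivList t.L2 B) (y + (t.k2 : ℝ) • h)) y) x := rfl
  rw [e0, fderiv_fun_mul' d1 d2]
  simp only [ContinuousLinearMap.add_apply, ContinuousLinearMap.smul_apply,
    ContinuousLinearMap.smulRight_apply, smul_eq_mul]
  rw [fderiv_shift dP, fderiv_shift dQ,
    fderiv_iterDiff t.j1 _ hpts1, fderiv_iterDiff t.j2 _ hpts2]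
  rfl

end DQAux

namespace DQAux

variable {N : ℕ} {W : Type*} [NormedRing W] [NormedAlgebra ℝ W]
variable {m : ℕ} {η : ℝ} {A B : ESp N → W}

lemma expansion (hA : ContDiffOn ℝ m A (ball 0 η)) (hB : ContDiffOn ℝ m B (ball 0 η))
    (h : ESp N) :
    ∀ L : List (Fin N), L.length ≤ m → ∀ j : ℕ,
      ∃ T : List (DQTerm N), T.length ≤ 2 ^ (j + L.length) ∧
        (∀ t ∈ T, DQGood j L.length t) ∧
        ∀ x : ESp N, (∀ i : ℕ, i ≤ j → x + (i : ℝ) • h ∈ ball (0 : ESp N) η) →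
          iterDiff j h (pderivList L (fun y => A y * B y)) x
            = (T.map (fun t => termVal A B h t x)).sum := by
  intro L
  induction L with
  | nil =>
    intro _ j
    induction j with
    | zero =>
      refine ⟨[⟨0, 0, [], 0, 0, []⟩], by simp, by simp [DQGood], ?_⟩
      intro x hx
      simp [iterDiff, pderivList, termVal]
    | succ j ihj =>
      obtain ⟨T, hTlen, hTgood, hTeq⟩ := ihj
      refine ⟨T.map (fun t => ⟨t.j1 + 1, t.k1, t.L1, t.j2, t.k2 + 1, t.L2⟩) ++
        T.map (fun t => ⟨t.j1, t.k1, t.L1, t.j2 + 1, t.k2, t.L2⟩), ?_, ?_, ?_⟩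
      · simp only [List.length_append, List.length_map, List.length_nil, Nat.add_zero] at *
        have h2 : 2 ^ (j + 1) = 2 ^ j + 2 ^ j := by ring
        omega
      · intro t ht
        rcases List.mem_append.1 ht with ht' | ht' <;>
          obtain ⟨s, hs, rfl⟩ := List.mem_map.1 ht' <;>
          obtain ⟨h1, h2, h3, h4⟩ := hTgood s hs <;>
          · simp only [DQGood, List.length_nil] at h4 ⊢
            omega
      · intro x hx
        have hx1 : ∀ i : ℕ, i ≤ j → x + h + (i : ℝ) • h ∈ ball (0 : ESp N) η := by
          intro i hi; rw [shift_index]; exact hx (i + 1) (by omega)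
        have hx0 : ∀ i : ℕ, i ≤ j → x + (i : ℝ) • h ∈ ball (0 : ESp N) η :=
          fun i hi => hx i (by omega)
        show iterDiff j h (pderivList [] (fun y => A y * B y)) (x + h)
            - iterDiff j h (pderivList [] (fun y => A y * B y)) x = _
        rw [hTeq (x + h) hx1, hTeq x hx0, list_map_sum_sub]
        rw [List.map_append, List.map_map, List.map_map, List.sum_append, ← list_map_sum_add]
        exact congrArg List.sum (List.map_congr_left fun t ht => termVal_diff A B h t x)
  | cons i0 L ihL =>
    intro hlen j
    obtain ⟨T, hTlen, hTgood, hTeq⟩ := ihL (by simp at hlen; omega) j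
    refine ⟨T.map (fun t => ⟨t.j1, t.k1, t.L1, t.j2, t.k2, i0 :: t.L2⟩) ++
      T.map (fun t => ⟨t.j1, t.k1, i0 :: t.L1, t.j2, t.k2, t.L2⟩), ?_, ?_, ?_⟩
    · simp only [List.length_append, List.length_map, List.length_cons]
      have h2 : 2 ^ (j + (L.length + 1)) = 2 ^ (j + L.length) + 2 ^ (j + L.length) := by ring
      omega
    · intro t ht
      rcases List.mem_append.1 ht with ht' | ht' <;>
        obtain ⟨s, hs, rfl⟩ := List.mem_map.1 ht' <;>
        obtain ⟨h1, h2, h3, h4⟩ := hTgood s hs <;>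
        · simp only [DQGood, List.length_cons] at h4 ⊢
          omega
    · intro x hx
      have hmL : L.length < m := by simp at hlen; omega
      have hAB : ContDiffOn ℝ m (fun y => A y * B y) (ball (0 : ESp N) η) := hA.mul hB
      have hdiffG : ∀ i : ℕ, i ≤ j → DifferentiableAt ℝ
          (pderivList L (fun y => A y * B y)) (x + (i : ℝ) • h) := by
        intro i hi
        exact differentiableAt_pderivList isOpen_ball hAB hmL (hx i hi)
      have step1 : iterDiff j h (pderivList (i0 :: L) (fun y => A y * B y)) x
          = fderiv ℝ (iterDiff j h (pderivList L (fun y => A y * B y))) x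
              (EuclideanSpace.single i0 1) :=
        (fderiv_iterDiff j x hdiffG).symm
      have hU : {y : ESp N | ∀ i : ℕ, i ≤ j → y + (i : ℝ) • h ∈ ball (0 : ESp N) η} ∈ nhds x :=
        (isOpen_admissible j h η).mem_nhds hx
      have heqn : iterDiff j h (pderivList L (fun y => A y * B y))
          =ᶠ[nhds x] fun y => (T.map (fun t => termVal A B h t y)).sum :=
        Filter.eventuallyEq_of_mem hU fun y hy => hTeq y hy
      rw [step1, heqn.fderiv_eq]
      rw [fderiv_listSum T (fun t y => termVal A B h t y) x (EuclideanSpace.single i0 1)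
        (fun t ht => termVal_differentiableAt hA hB hmL (hTgood t ht) h hx)]
      rw [List.map_append, List.map_map, List.map_map, List.sum_append, ← list_map_sum_add]
      exact congrArg List.sum
        (List.map_congr_left fun t ht => termVal_fderiv_apply hA hB hmL (hTgood t ht) h hx i0)

end DQAux


/-- `DQBound N ν m l η ω F K` : componentwise bound for the `C^{m,l,ω}` norm of a
matrix-valued function `F` on `Bⁿ(η)`: for every multi-index `β` (a list of
directions) with `|β| ≤ m`, every `0 ≤ j ≤ l`, and every admissible `(x,h)`,
`ω(|h|)^{-j} ‖Δ_h^j ∂_x^β F(x)‖ ≤ K`. -/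
def DQBound (N ν m l : ℕ) (η : ℝ) (ω : ℝ → ℝ)
    (F : EuclideanSpace ℝ (Fin N) →
      (EuclideanSpace ℝ (Fin ν) →L[ℝ] EuclideanSpace ℝ (Fin ν)))
    (K : ℝ) : Prop :=
  ∀ L : List (Fin N), L.length ≤ m → ∀ j ≤ l,
    ∀ x h : EuclideanSpace ℝ (Fin N), h ≠ 0 →
    (∀ i : ℕ, i ≤ j → x + (i : ℝ) • h ∈ ball (0 : EuclideanSpace ℝ (Fin N)) η) →
    ‖iterDiff j h (pderivList L F) x‖ ≤ ω ‖h‖ ^ j * K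

/-- Algebra property of the spaces `C^{m,l,ω}`: there is a
constant `C` depending only on `m` and `l` such that for all dimensions, balls,
nondecreasing weights `ω`, and matrix-valued `A, B ∈ C^{m,l,ω}` with norms
bounded by `KA, KB`, the product `AB` lies in `C^{m,l,ω}` with norm bound
`C · KA · KB`.  Moreover `‖A‖_{C^{j,k,ω}} ≤ ‖A‖_{C^{m,l,ω}}` for `j ≤ m`, `k ≤ l`. -/
theorem Cmlomega_algebra (m l : ℕ) :
    ∃ C : ℝ, 0 < C ∧
      ∀ (N ν : ℕ) (η : ℝ), 0 < η →
      ∀ ω : ℝ → ℝ, (∀ a b : ℝ, 0 < a → a ≤ b → ω a ≤ ω b) →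
        (∀ t : ℝ, 0 < t → 0 < ω t) →
      ∀ (A B : EuclideanSpace ℝ (Fin N) →
          (EuclideanSpace ℝ (Fin ν) →L[ℝ] EuclideanSpace ℝ (Fin ν)))
        (KA KB : ℝ),
        ContDiffOn ℝ m A (ball 0 η) → ContDiffOn ℝ m B (ball 0 η) →
        DQBound N ν m l η ω A KA → DQBound N ν m l η ω B KB →
        DQBound N ν m l η ω (fun x => A x * B x) (C * KA * KB) ∧
        (∀ m' l' : ℕ, m' ≤ m → l' ≤ l → DQBound N ν m' l' η ω A KA) := by
  refine ⟨2 ^ (l + m), by positivity, ?_⟩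
  intro N ν η hη ω hωmono hωpos A B KA KB hA hB hDA hDB
  constructor
  · intro L hL j hj x h hh hx
    -- nonnegativity of KA, KB
    have hball0 : ∀ i : ℕ, i ≤ 0 →
        (0 : DQAux.ESp N) + (i : ℝ) • h ∈ ball (0 : DQAux.ESp N) η := by
      intro i hi
      interval_cases i
      simpa using mem_ball_self (x := (0 : DQAux.ESp N)) hη
    have hKA : 0 ≤ KA := by
      have := hDA [] (Nat.zero_le m) 0 (Nat.zero_le l) 0 h hh hball0
      simpa using le_trans (norm_nonneg _) this
    have hKB : 0 ≤ KB := by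
      have := hDB [] (Nat.zero_le m) 0 (Nat.zero_le l) 0 h hh hball0
      simpa using le_trans (norm_nonneg _) this
    have hωh : 0 < ω ‖h‖ := hωpos ‖h‖ (norm_pos_iff.2 hh)
    obtain ⟨T, hTlen, hTgood, hTeq⟩ := DQAux.expansion hA hB h L hL j
    rw [hTeq x hx]
    have hterm : ∀ r ∈ (T.map fun t => DQAux.termVal A B h t x).map norm,
        r ≤ ω ‖h‖ ^ j * (KA * KB) := by
      simp only [List.map_map, List.mem_map, Function.comp]
      rintro r ⟨t, ht, rfl⟩
      obtain ⟨hj12, hk1, hk2, hL12⟩ := hTgood t ht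
      have hP : ‖iterDiff t.j1 h (pderivList t.L1 A) (x + (t.k1 : ℝ) • h)‖
          ≤ ω ‖h‖ ^ t.j1 * KA := by
        apply hDA t.L1 (by omega) t.j1 (by omega) _ h hh
        intro i hi
        rw [DQAux.add_smul_nat]
        exact hx (t.k1 + i) (by omega)
      have hQ : ‖iterDiff t.j2 h (pderivList t.L2 B) (x + (t.k2 : ℝ) • h)‖
          ≤ ω ‖h‖ ^ t.j2 * KB := by
        apply hDB t.L2 (by omega) t.j2 (by omega) _ h hh
        intro i hi
        rw [DQAux.add_smul_nat]
        exact hx (t.k2 + i) (by omega)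
      calc ‖DQAux.termVal A B h t x‖
          ≤ ‖iterDiff t.j1 h (pderivList t.L1 A) (x + (t.k1 : ℝ) • h)‖ *
            ‖iterDiff t.j2 h (pderivList t.L2 B) (x + (t.k2 : ℝ) • h)‖ := norm_mul_le _ _
        _ ≤ (ω ‖h‖ ^ t.j1 * KA) * (ω ‖h‖ ^ t.j2 * KB) :=
            mul_le_mul hP hQ (norm_nonneg _) (le_trans (norm_nonneg _) hP)
        _ = ω ‖h‖ ^ j * (KA * KB) := by rw [← hj12]; ring
    calc ‖(T.map fun t => DQAux.termVal A B h t x).sum‖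
        ≤ ((T.map fun t => DQAux.termVal A B h t x).map norm).sum := DQAux.norm_list_sum_le _
      _ ≤ ((T.map fun t => DQAux.termVal A B h t x).map norm).length •
            (ω ‖h‖ ^ j * (KA * KB)) := List.sum_le_card_nsmul _ _ hterm
      _ = (T.length : ℝ) * (ω ‖h‖ ^ j * (KA * KB)) := by
            simp [nsmul_eq_mul]
      _ ≤ (2 : ℝ) ^ (l + m) * (ω ‖h‖ ^ j * (KA * KB)) := by
            apply mul_le_mul_of_nonneg_right _ (by positivity)
            have h1 : T.length ≤ 2 ^ (l + m) :=
              le_trans hTlen (Nat.pow_le_pow_right (by norm_num) (by omega))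
            exact_mod_cast h1
      _ = ω ‖h‖ ^ j * (2 ^ (l + m) * KA * KB) := by ring
  · intro m' l' hm' hl' L hL j hj x h hh hx
    exact hDA L (hL.trans hm') j (hj.trans hl') x h hh hx
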